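/- Let n ≥ 4. Suppose c > 0 and δ ∈ [0, 1) are such that for every X ∈ Cent(n) with rank(X) ≤ 2 one has (1 − δ)·‖X‖_F² ≤ c·‖Δ(X)‖_F² ≤ (1 + δ)·‖X‖_F². Then δ ≥ 1 − 4/(n + 2). (That is, the EDM map Δ fails the rank-2 restricted isometry property with any constant δ < 1 − 4/(n+2).) -/

import Mathlib

open Matrix

namespace SNL

noncomputable def delta {n : ℕ} (X : Matrix (Fin n) (Fin n) ℝ) : Matrix (Fin n) (Fin n) ℝ :=
  Matrix.of fun i j => (X i i + X j j - 2 * X i j) / 2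

noncomputable def deltaStar {n : ℕ} (H : Matrix (Fin n) (Fin n) ℝ) : Matrix (Fin n) (Fin n) ℝ :=
  Matrix.diagonal (fun i => ∑ k, H i k) - H

def frobInner {n m : ℕ} (X Y : Matrix (Fin n) (Fin m) ℝ) : ℝ := ∑ i, ∑ j, X i j * Y i j

def frobNormSq {n m : ℕ} (X : Matrix (Fin n) (Fin m) ℝ) : ℝ := frobInner X X

noncomputable def snlCost {n ℓ k : ℕ} (Y : Matrix (Fin n) (Fin ℓ) ℝ)
    (Z : Matrix (Fin n) (Fin k) ℝ) : ℝ :=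
  frobNormSq (delta (Z * Zᵀ - Y * Yᵀ))

def IsFirstOrderCritical {n ℓ k : ℕ} (Y : Matrix (Fin n) (Fin ℓ) ℝ)
    (Z : Matrix (Fin n) (Fin k) ℝ) : Prop :=
  deltaStar (delta (Z * Zᵀ - Y * Yᵀ)) * Z = 0

def IsSecondOrderCritical {n ℓ k : ℕ} (Y : Matrix (Fin n) (Fin ℓ) ℝ)
    (Z : Matrix (Fin n) (Fin k) ℝ) : Prop :=
  IsFirstOrderCritical Y Z ∧
    ∀ W : Matrix (Fin n) (Fin k) ℝ,
      0 ≤ frobInner (W * Wᵀ) (deltaStar (delta (Z * Zᵀ - Y * Yᵀ)))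
          + (1 / 2) * frobNormSq (delta (W * Zᵀ + Z * Wᵀ))

noncomputable def centering (n : ℕ) : Matrix (Fin n) (Fin n) ℝ :=
  1 - ((n : ℝ)⁻¹) • Matrix.of (fun _ _ => (1 : ℝ))

def diagM {n : ℕ} (X : Matrix (Fin n) (Fin n) ℝ) : Matrix (Fin n) (Fin n) ℝ :=
  Matrix.diagonal (fun i => X i i)

noncomputable def Gamma {n : ℕ} (X : Matrix (Fin n) (Fin n) ℝ) : Matrix (Fin n) (Fin n) ℝ :=
  centering n * diagM X * centering n

noncomputable def Psi {n : ℕ} (X : Matrix (Fin n) (Fin n) ℝ) : Matrix (Fin n) (Fin n) ℝ :=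
  ((n : ℝ) / 2) • (centering n * diagM X * centering n) +
    ((1 / 2) * Matrix.trace X) • centering n

noncomputable def lambdaMax {n : ℕ} (X : Matrix (Fin n) (Fin n) ℝ) : ℝ :=
  sSup {r : ℝ | ∃ v : Fin n → ℝ, (∑ i, v i ^ 2) = 1 ∧ r = v ⬝ᵥ (X *ᵥ v)}

end SNL

open SNL Matrix

lemma sum_ite_one' {n : ℕ} (p : Fin n) (x y : ℝ) :
    ∑ i : Fin n, (if i = p then x else y) = x + ((n:ℝ)-1)*y := by
  have h : ∀ i : Fin n, (if i = p then x else y) = y + (if i = p then x - y else 0) := by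
    intro i; split_ifs <;> ring
  simp_rw [h, Finset.sum_add_distrib, Finset.sum_const, Finset.sum_ite_eq' Finset.univ p]
  simp
  ring

lemma sum_ite_two' {n : ℕ} {p q : Fin n} (hpq : p ≠ q) (x y : ℝ) :
    ∑ i : Fin n, (if i = p then x else if i = q then y else 0) = x + y := by
  have h : ∀ i : Fin n, (if i = p then x else if i = q then y else 0)
      = (if i = p then x else 0) + (if i = q then y else 0) := by
    intro i
    by_cases h1 : i = p <;> by_cases h2 : i = q <;> simp_all
  simp_rw [h, Finset.sum_add_distrib, Finset.sum_ite_eq' Finset.univ]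
  simp

set_option maxHeartbeats 1600000 in
theorem statement_18 {n : ℕ} (hn : 4 ≤ n) (c δ : ℝ) (hc : 0 < c)
    (hδ0 : 0 ≤ δ) (hδ1 : δ < 1)
    (hRIP : ∀ X : Matrix (Fin n) (Fin n) ℝ, X.IsSymm → X *ᵥ (fun _ => (1 : ℝ)) = 0 →
      X.rank ≤ 2 →
      (1 - δ) * frobNormSq X ≤ c * frobNormSq (delta X) ∧
      c * frobNormSq (delta X) ≤ (1 + δ) * frobNormSq X) :
    δ ≥ 1 - 4 / ((n : ℝ) + 2) := by
  set N : ℝ := (n : ℝ) with hN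
  have hN4 : (4:ℝ) ≤ N := by rw [hN]; exact_mod_cast hn
  -- the rank-one witness
  set i0 : Fin n := ⟨0, by omega⟩ with hi0
  set u : Fin n → ℝ := fun i => if i = i0 then N - 1 else -1 with hu
  have hSk : ∀ k : ℕ, ∑ i, u i ^ k = (N-1)^k + (N-1)*(-1:ℝ)^k := by
    intro k
    have h : ∀ i, u i ^ k = if i = i0 then (N-1)^k else (-1:ℝ)^k := by
      intro i; simp only [hu]; split_ifs <;> rfl
    simp_rw [h, sum_ite_one']
    rfl
  have hS1 : ∑ i, u i = 0 := by
    have := hSk 1; simpa using this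
  have hS2 : ∑ i, u i ^ 2 = (N-1)^2 + (N-1) := by rw [hSk 2]; ring
  have hS3 : ∑ i, u i ^ 3 = (N-1)^3 - (N-1) := by
    have := hSk 3; rw [this]; ring
  have hS4 : ∑ i, u i ^ 4 = (N-1)^4 + (N-1) := by rw [hSk 4]; ring
  set X1 : Matrix (Fin n) (Fin n) ℝ := Matrix.of (fun i j => u i * u j) with hX1
  have hX1e : ∀ i j, X1 i j = u i * u j := by intro i j; rw [hX1]; rfl
  have hsymm1 : X1.IsSymm := by
    rw [Matrix.IsSymm]; ext i j
    rw [Matrix.transpose_apply, hX1e, hX1e, mul_comm]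
  have hcent1 : X1 *ᵥ (fun _ => (1:ℝ)) = 0 := by
    funext i
    simp only [Matrix.mulVec, dotProduct, mul_one, Pi.zero_apply]
    simp_rw [hX1e]
    rw [← Finset.mul_sum, hS1, mul_zero]
  have hrank1 : X1.rank ≤ 2 := by
    have : X1 = (Matrix.of fun i (_ : Fin 1) => u i) * (Matrix.of fun (_ : Fin 1) j => u j) := by
      ext i j; simp [Matrix.mul_apply, hX1e]
    rw [this]
    exact le_trans (Matrix.rank_mul_le_right _ _)
      (le_trans (Matrix.rank_le_card_height _) (by simp))
  have hF1 : frobNormSq X1 = ((N-1)^2 + (N-1))^2 := by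
    unfold frobNormSq frobInner
    have e : ∀ i j : Fin n, X1 i j * X1 i j = u i ^ 2 * u j ^ 2 := by
      intro i j; rw [hX1e]; ring
    simp_rw [e, ← Finset.mul_sum, ← Finset.sum_mul, hS2]
    ring
  have hD1 : frobNormSq (delta X1) = (2*N*((N-1)^4 + (N-1)) + 6*((N-1)^2+(N-1))^2)/4 := by
    unfold frobNormSq frobInner
    have e : ∀ i j : Fin n, delta X1 i j * delta X1 i j =
        (u i^4 + u j^4 + 6*(u i^2*u j^2) - 4*(u i^3*u j) - (4*(u i*u j^3)))/4 := by
      intro i j; simp only [SNL.delta, Matrix.of_apply, hX1e]; ring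
    simp_rw [e]
    simp_rw [← Finset.sum_div]
    congr 1
    simp only [Finset.sum_sub_distrib, Finset.sum_add_distrib, ← Finset.mul_sum,
      ← Finset.sum_mul, Finset.sum_const, Finset.card_univ, Fintype.card_fin,
      nsmul_eq_mul, hS1, hS2, hS3, hS4, mul_zero, zero_mul]
    try rw [← hN]
    ring
  -- the rank-two zero-diagonal witness
  set i1 : Fin n := ⟨1, by omega⟩ with hi1
  set i2 : Fin n := ⟨2, by omega⟩ with hi2
  set i3 : Fin n := ⟨3, by omega⟩ with hi3
  set v : Fin n → ℝ := fun i => if i = i0 then 1 else if i = i1 then -1 else 0 with hv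
  set w : Fin n → ℝ := fun i => if i = i2 then 1 else if i = i3 then -1 else 0 with hw
  have h01 : i0 ≠ i1 := by simp [hi0, hi1, Fin.ext_iff]
  have h23 : i2 ≠ i3 := by simp [hi2, hi3, Fin.ext_iff]
  have hSv1 : ∑ i, v i = 0 := by
    simp only [hv]; rw [sum_ite_two' h01]; ring
  have hSw1 : ∑ i, w i = 0 := by
    simp only [hw]; rw [sum_ite_two' h23]; ring
  have hSv2 : ∑ i, v i ^ 2 = 2 := by
    have h : ∀ i, v i ^ 2 = if i = i0 then 1 else if i = i1 then 1 else 0 := by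
      intro i; simp only [hv]; split_ifs <;> norm_num
    simp_rw [h]; rw [sum_ite_two' h01]; norm_num
  have hSw2 : ∑ i, w i ^ 2 = 2 := by
    have h : ∀ i, w i ^ 2 = if i = i2 then 1 else if i = i3 then 1 else 0 := by
      intro i; simp only [hw]; split_ifs <;> norm_num
    simp_rw [h]; rw [sum_ite_two' h23]; norm_num
  have hvw : ∀ i, v i * w i = 0 := by
    intro i
    simp only [hv, hw]
    split_ifs <;> simp_all [hi0, hi1, hi2, hi3, Fin.ext_iff]
  set X2 : Matrix (Fin n) (Fin n) ℝ := Matrix.of (fun i j => v i * w j + w i * v j) with hX2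
  have hX2e : ∀ i j, X2 i j = v i * w j + w i * v j := by intro i j; rw [hX2]; rfl
  have hsymm2 : X2.IsSymm := by
    rw [Matrix.IsSymm]; ext i j
    rw [Matrix.transpose_apply, hX2e, hX2e]; ring
  have hcent2 : X2 *ᵥ (fun _ => (1:ℝ)) = 0 := by
    funext i
    simp only [Matrix.mulVec, dotProduct, mul_one, Pi.zero_apply]
    simp_rw [hX2e]
    rw [Finset.sum_add_distrib, ← Finset.mul_sum, ← Finset.mul_sum, hSv1, hSw1]
    ring
  have hrank2 : X2.rank ≤ 2 := by
    have : X2 = (Matrix.of fun i (k : Fin 2) => if k = 0 then v i else w i) *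
        (Matrix.of fun (k : Fin 2) j => if k = 0 then w j else v j) := by
      ext i j; simp [Matrix.mul_apply, Fin.sum_univ_two, hX2e]
    rw [this]
    exact le_trans (Matrix.rank_mul_le_right _ _)
      (le_trans (Matrix.rank_le_card_height _) (by simp))
  have e2 : ∀ i j : Fin n, X2 i j * X2 i j = v i ^ 2 * w j ^ 2 + w i ^ 2 * v j ^ 2 := by
    intro i j; rw [hX2e]
    linear_combination (2 * (v j * w j)) * hvw i
  have hF2 : frobNormSq X2 = 8 := by
    unfold frobNormSq frobInner
    simp_rw [e2]
    simp only [Finset.sum_add_distrib, ← Finset.mul_sum, ← Finset.sum_mul, hSv2, hSw2]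
    norm_num
  have hD2 : frobNormSq (delta X2) = 8 := by
    unfold frobNormSq frobInner
    have e : ∀ i j : Fin n, delta X2 i j * delta X2 i j
        = v i ^ 2 * w j ^ 2 + w i ^ 2 * v j ^ 2 := by
      intro i j
      simp only [SNL.delta, Matrix.of_apply, hX2e]
      linear_combination (v i * w i + 4 * (v j * w j) - 2 * (v i * w j + w i * v j)) * hvw i
        + (v j * w j - 2 * (v i * w j + w i * v j)) * hvw j
    simp_rw [e]
    simp only [Finset.sum_add_distrib, ← Finset.mul_sum, ← Finset.sum_mul, hSv2, hSw2]
    norm_num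
  -- apply the RIP hypothesis
  obtain ⟨hL1, hR1⟩ := hRIP X1 hsymm1 hcent1 hrank1
  obtain ⟨hL2, hR2⟩ := hRIP X2 hsymm2 hcent2 hrank2
  rw [hF1, hD1] at hR1
  rw [hF2, hD2] at hL2
  have hcge : 1 - δ ≤ c := by linarith
  have hQ0 : (0:ℝ) ≤ (2*N*((N-1)^4 + (N-1)) + 6*((N-1)^2+(N-1))^2)/4 := by nlinarith
  have key : (1-δ) * ((2*N*((N-1)^4 + (N-1)) + 6*((N-1)^2+(N-1))^2)/4)
      ≤ (1+δ) * (((N-1)^2 + (N-1))^2) :=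
    le_trans (mul_le_mul_of_nonneg_right hcge hQ0) hR1
  have hpos : (0:ℝ) < N^2*(N-1) := by nlinarith
  have hstep : (1-δ)*N^2 ≤ 2*(1+δ)*(N-1) := by nlinarith [key, hpos]
  have hstep2 : N^2 - 2*N + 2 ≤ δ*(N^2 + 2*N - 2) := by nlinarith [hstep]
  have h2 : (0:ℝ) < N + 2 := by linarith
  have hposA : (0:ℝ) < N^2 + 2*N - 2 := by nlinarith
  have hgoal : 1 - 4/(N+2) = (N-2)/(N+2) := by field_simp; ring
  rw [ge_iff_le, hgoal, div_le_iff₀ h2]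
  nlinarith [hstep2, hposA, h2, hN4]
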